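/- Primal rounding sandwich (first half of the paper's Theorem relating maxq, fevc, ν, ν°): under the conic assumptions, suppose α ≥ 0 is such that for every Y ∈ A with diag(Y) = 1 there exists a probability vector p ∈ R_+^{F(A)} (i.e., ∑_{U∈F(A)} p_U = 1) with ∑_{U∈F(A)} p_U s_U s_Uᵀ − αY ∈ lift. Then for every W ∈ K, α·ν(W) ≤ maxq(W) ≤ ν(W). -/

import Mathlib

open Matrix Finset

noncomputable section

/-- The trace inner product `⟨X,Y⟩ = tr(XY)` on symmetric matrices. -/
def ip {n : ℕ} (X Y : Matrix (Fin n) (Fin n) ℝ) : ℝ := (X * Y).trace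

/-- The signed incidence vector `s_U ∈ {±1}ⁿ` of `U ⊆ [n]`. -/
def sgn {n : ℕ} (U : Finset (Fin n)) : Fin n → ℝ := fun i => if i ∈ U then 1 else -1

/-- The rank-one sign matrix `s_U s_Uᵀ`. -/
def stensor {n : ℕ} (U : Finset (Fin n)) : Matrix (Fin n) (Fin n) ℝ :=
  fun i j => sgn U i * sgn U j

/-- The quadratic form `vᵀ W v`. -/
def qform {n : ℕ} (W : Matrix (Fin n) (Fin n) ℝ) (v : Fin n → ℝ) : ℝ :=
  ∑ i, ∑ j, v i * W i j * v j

/-- The dual cone (within the space `Sym(n)` of symmetric matrices) of a set `S ⊆ Sym(n)`. -/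
def dualSet {n : ℕ} (S : Set (Matrix (Fin n) (Fin n) ℝ)) : Set (Matrix (Fin n) (Fin n) ℝ) :=
  {X | X.IsSymm ∧ ∀ Y ∈ S, 0 ≤ ip X Y}

/-- The data of the conic framework: closed convex cones `A`, `K̂` of symmetric matrices,
and a linear map `L`. -/
structure ConicSetting (n k : ℕ) where
  A : Set (Matrix (Fin n) (Fin n) ℝ)
  Khat : Set (Matrix (Fin n) (Fin n) ℝ)
  L : Matrix (Fin n) (Fin n) ℝ →ₗ[ℝ] (Fin k → ℝ)
  A_symm : ∀ X ∈ A, X.IsSymm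
  A_closed : IsClosed A
  A_smul : ∀ c : ℝ, 0 ≤ c → ∀ X ∈ A, c • X ∈ A
  A_add : ∀ X ∈ A, ∀ Y ∈ A, X + Y ∈ A
  Khat_symm : ∀ X ∈ Khat, X.IsSymm
  Khat_closed : IsClosed Khat
  Khat_smul : ∀ c : ℝ, 0 ≤ c → ∀ X ∈ Khat, c • X ∈ Khat
  Khat_add : ∀ X ∈ Khat, ∀ Y ∈ Khat, X + Y ∈ Khat

namespace ConicSetting

variable {n k : ℕ} (S : ConicSetting n k)

/-- `K := K̂ ∩ ker L`. -/
def K : Set (Matrix (Fin n) (Fin n) ℝ) := {X | X ∈ S.Khat ∧ S.L X = 0}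

/-- `F(A) := {U ⊆ [n] : s_U s_Uᵀ ∈ A}`. -/
def FA : Set (Finset (Fin n)) := {U | stensor U ∈ S.A}

/-- The range of the adjoint of `L` restricted to `Sym(n)`, i.e. the orthogonal complement
of `ker L ∩ Sym(n)` inside `Sym(n)`. -/
def rangeLstar : Set (Matrix (Fin n) (Fin n) ℝ) :=
  {Q | Q.IsSymm ∧ ∀ Y : Matrix (Fin n) (Fin n) ℝ, Y.IsSymm → S.L Y = 0 → ip Q Y = 0}

/-- `lift := K̂* + range(L*)`. -/
def lift : Set (Matrix (Fin n) (Fin n) ℝ) :=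
  {X | ∃ P ∈ dualSet S.Khat, ∃ Q ∈ S.rangeLstar, X = P + Q}

/-- `K* := {X ∈ ker L : ⟨X,Y⟩ ≥ 0 for all Y ∈ K}` (within `Sym(n)`). -/
def Kstar : Set (Matrix (Fin n) (Fin n) ℝ) :=
  {X | X.IsSymm ∧ S.L X = 0 ∧ ∀ Y ∈ S.K, 0 ≤ ip X Y}

/-- The convex cone generated by `CUT^A = conv{s_U s_Uᵀ : U ∈ F(A)}`. -/
def coneCUT : Set (Matrix (Fin n) (Fin n) ℝ) :=
  {X | ∃ y : Finset (Fin n) → ℝ, (∀ U, 0 ≤ y U) ∧ (∀ U, U ∉ S.FA → y U = 0) ∧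
    X = ∑ U : Finset (Fin n), y U • stensor U}

/-- The conic assumptions: `A ⊆ PSD(n)`, `K ⊆ A*`, `cone(CUT^A)` has nonempty interior in
`Sym(n)`, and `K̂` has a nonzero Slater point in `ker L` (interior taken in `Sym(n)`). -/
structure Assumptions : Prop where
  A_psd : ∀ X ∈ S.A, X.PosSemidef
  K_sub_Astar : S.K ⊆ dualSet S.A
  cut_interior : (interior {X : {M : Matrix (Fin n) (Fin n) ℝ // M.IsSymm} |
      (X : Matrix (Fin n) (Fin n) ℝ) ∈ S.coneCUT}).Nonempty
  Khat_slater : ∃ X : {M : Matrix (Fin n) (Fin n) ℝ // M.IsSymm},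
      (X : Matrix (Fin n) (Fin n) ℝ) ≠ 0 ∧
      X ∈ interior {M : {M : Matrix (Fin n) (Fin n) ℝ // M.IsSymm} |
        (M : Matrix (Fin n) (Fin n) ℝ) ∈ S.Khat} ∧
      S.L X = 0

/-- `maxq(W) := max{s_Uᵀ W s_U : U ∈ F(A)}`. -/
def maxq (W : Matrix (Fin n) (Fin n) ℝ) : ℝ :=
  sSup {r | ∃ U ∈ S.FA, r = qform W (sgn U)}

/-- `ν(W) := max{⟨W,Y⟩ : Y ∈ A, diag(Y) = 1}`. -/
def nu (W : Matrix (Fin n) (Fin n) ℝ) : ℝ :=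
  sSup {r | ∃ Y ∈ S.A, (∀ i, Y i i = 1) ∧ r = ip W Y}

/-- `y ∈ ℝ₊^{F(A)}` is a tensor sign cover for `Z`:
`∑_{U ∈ F(A)} y_U s_U s_Uᵀ ⪰_lift Z`. -/
def CoverFeas (Z : Matrix (Fin n) (Fin n) ℝ) (y : Finset (Fin n) → ℝ) : Prop :=
  (∀ U, 0 ≤ y U) ∧ (∀ U, U ∉ S.FA → y U = 0) ∧
  (∑ U : Finset (Fin n), y U • stensor U) - Z ∈ S.lift

/-- `fevc(Z)`: minimum total weight of a tensor sign cover of `Z`. -/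
def fevc (Z : Matrix (Fin n) (Fin n) ℝ) : ℝ :=
  sInf {r | ∃ y, S.CoverFeas Z y ∧ r = ∑ U : Finset (Fin n), y U}

/-- `ν°(Z) := inf{μ ≥ 0 : ∃ Y ∈ A, diag(Y) = μ·1, Y ⪰_lift Z}`. -/
def nuPolar (Z : Matrix (Fin n) (Fin n) ℝ) : ℝ :=
  sInf {μ | 0 ≤ μ ∧ ∃ Y ∈ S.A, (∀ i, Y i i = μ) ∧ Y - Z ∈ S.lift}

end ConicSetting

section Helpers

lemma ip_eq_sum {n : ℕ} (X Y : Matrix (Fin n) (Fin n) ℝ) :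
    ip X Y = ∑ i, ∑ j, X i j * Y j i := by
  simp [ip, Matrix.trace, Matrix.mul_apply, Matrix.diag]

lemma ip_comm {n : ℕ} (X Y : Matrix (Fin n) (Fin n) ℝ) : ip X Y = ip Y X :=
  Matrix.trace_mul_comm X Y

lemma ip_sub {n : ℕ} (W A B : Matrix (Fin n) (Fin n) ℝ) :
    ip W (A - B) = ip W A - ip W B := by
  simp [ip, Matrix.mul_sub]

lemma ip_smul {n : ℕ} (W A : Matrix (Fin n) (Fin n) ℝ) (c : ℝ) :
    ip W (c • A) = c * ip W A := by
  simp [ip, Matrix.mul_smul]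

lemma ip_sum {n : ℕ} {ι : Type*} (s : Finset ι) (W : Matrix (Fin n) (Fin n) ℝ)
    (f : ι → Matrix (Fin n) (Fin n) ℝ) :
    ip W (∑ u ∈ s, f u) = ∑ u ∈ s, ip W (f u) := by
  simp [ip, Finset.mul_sum, Matrix.trace_sum]

lemma ip_stensor {n : ℕ} (W : Matrix (Fin n) (Fin n) ℝ) (U : Finset (Fin n)) :
    ip W (stensor U) = qform W (sgn U) := by
  rw [ip_eq_sum]
  unfold qform stensor
  refine Finset.sum_congr rfl fun i _ => Finset.sum_congr rfl fun j _ => by ring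

lemma sgn_sq {n : ℕ} (U : Finset (Fin n)) (i : Fin n) : sgn U i * sgn U i = 1 := by
  unfold sgn; split <;> norm_num

lemma psd_entry_le {n : ℕ} {Y : Matrix (Fin n) (Fin n) ℝ} (hY : Y.PosSemidef)
    (hd : ∀ i, Y i i = 1) (i j : Fin n) : |Y i j| ≤ 1 := by
  rcases eq_or_ne i j with rfl | hij
  · rw [hd i]; norm_num
  · have hsym : Y j i = Y i j := by
      have := hY.1
      have h2 : Y.transpose = Y := by
        ext a b; rw [Matrix.transpose_apply]
        have h3 := this.apply b a; simp at h3; exact h3.symm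
      calc Y j i = Y.transpose i j := rfl
        _ = Y i j := by rw [h2]
    have key : ∀ ε : ℝ, 0 ≤ 1 + (ε * Y j i + (ε * Y i j + ε * ε)) := by
      intro ε
      have h := hY.dotProduct_mulVec_nonneg ((Pi.single i 1 : Fin n → ℝ) + ε • (Pi.single j 1 : Fin n → ℝ))
      simpa [Matrix.mulVec_add, Matrix.mulVec_smul, Matrix.mulVec_single,
        dotProduct_add, add_dotProduct, smul_dotProduct,
        single_dotProduct, hd i, hd j, Pi.single_apply, hij, hij.symm,
        mul_comm, mul_add, add_assoc] using h
    have h1 := key 1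
    have h2 := key (-1)
    rw [abs_le]
    constructor <;> nlinarith [hsym]

lemma lift_nonneg {n k : ℕ} (S : ConicSetting n k) {W D : Matrix (Fin n) (Fin n) ℝ}
    (hW : W ∈ S.K) (hD : D ∈ S.lift) : 0 ≤ ip D W := by
  obtain ⟨P, hP, Q, hQ, rfl⟩ := hD
  have h1 : 0 ≤ ip P W := hP.2 W hW.1
  have h2 : ip Q W = 0 := hQ.2 W (S.Khat_symm W hW.1) hW.2
  have : ip (P + Q) W = ip P W + ip Q W := by
    simp [ip, Matrix.add_mul]
  linarith

end Helpers

/-- primal rounding sandwich: under the conic assumptions, if `α ≥ 0`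
is such that every `Y ∈ A` with unit diagonal admits a probability vector
`p ∈ ℝ₊^{F(A)}` with `∑_U p_U s_U s_Uᵀ − αY ∈ lift`, then `α·ν(W) ≤ maxq(W) ≤ ν(W)` for
every `W ∈ K`. -/
theorem primal_rounding_sandwich {n k : ℕ} (hn : 1 ≤ n) (S : ConicSetting n k)
    (hS : S.Assumptions) (α : ℝ) (hα : 0 ≤ α)
    (hround : ∀ Y ∈ S.A, (∀ i, Y i i = 1) →
      ∃ p : Finset (Fin n) → ℝ, (∀ U, 0 ≤ p U) ∧ (∀ U, U ∉ S.FA → p U = 0) ∧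
        (∑ U : Finset (Fin n), p U) = 1 ∧
        (∑ U : Finset (Fin n), p U • stensor U) - α • Y ∈ S.lift) :
    ∀ W ∈ S.K, α * S.nu W ≤ S.maxq W ∧ S.maxq W ≤ S.nu W := by
  intro W hW
  set f : Finset (Fin n) → ℝ := fun U => qform W (sgn U) with hf
  set maxqSet := {r | ∃ U ∈ S.FA, r = qform W (sgn U)} with hmset
  set nuSet := {r | ∃ Y ∈ S.A, (∀ i, Y i i = 1) ∧ r = ip W Y} with hnset
  have hmaxq : S.maxq W = sSup maxqSet := rfl
  have hnu : S.nu W = sSup nuSet := rfl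
  by_cases hFA : ∃ U, U ∈ S.FA
  case neg =>
    -- F(A) empty; then A has no unit-diagonal element either, both sups are of ∅.
    have hnuE : nuSet = ∅ := by
      ext r
      simp only [hnset, Set.mem_setOf_eq, Set.mem_empty_iff_false, iff_false]
      rintro ⟨Y, hY, hdiag, rfl⟩
      obtain ⟨p, hp0, hpsupp, hpsum, -⟩ := hround Y hY hdiag
      have : (∑ U : Finset (Fin n), p U) = 0 := by
        apply Finset.sum_eq_zero
        intro U _
        exact hpsupp U (fun h => hFA ⟨U, h⟩)
      rw [this] at hpsum; norm_num at hpsum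
    have hmE : maxqSet = ∅ := by
      ext r
      simp only [hmset, Set.mem_setOf_eq, Set.mem_empty_iff_false, iff_false]
      rintro ⟨U, hU, rfl⟩
      exact hFA ⟨U, hU⟩
    rw [hmaxq, hnu, hnuE, hmE, Real.sSup_empty]
    norm_num
  case pos =>
    obtain ⟨U0, hU0⟩ := hFA
    have hmne : maxqSet.Nonempty := ⟨f U0, U0, hU0, rfl⟩
    have hmbdd : BddAbove maxqSet := by
      apply Set.Finite.bddAbove
      apply Set.Finite.subset (Set.finite_range f)
      rintro r ⟨U, _, rfl⟩
      exact ⟨U, rfl⟩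
    have hWdual : W ∈ dualSet S.A := hS.K_sub_Astar hW
    have hfle : ∀ U ∈ S.FA, f U ≤ S.maxq W := fun U hU => le_csSup hmbdd ⟨U, hU, rfl⟩
    have hmaxq0 : 0 ≤ S.maxq W := by
      refine le_trans ?_ (hfle U0 hU0)
      rw [hf]
      simp only
      rw [← ip_stensor]
      exact hWdual.2 (stensor U0) hU0
    -- diag of stensor is 1
    have hstdiag : ∀ (U : Finset (Fin n)) (i : Fin n), stensor U i i = 1 := fun U i => sgn_sq U i
    -- maxqSet ⊆ nuSet
    have hsub : maxqSet ⊆ nuSet := by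
      rintro r ⟨U, hU, rfl⟩
      exact ⟨stensor U, hU, hstdiag U, (ip_stensor W U).symm⟩
    -- nuSet is bounded above
    have hnbdd : BddAbove nuSet := by
      refine ⟨∑ i, ∑ j, |W i j|, ?_⟩
      rintro r ⟨Y, hY, hdiag, rfl⟩
      rw [ip_eq_sum]
      refine Finset.sum_le_sum fun i _ => Finset.sum_le_sum fun j _ => ?_
      have hb := psd_entry_le (hS.A_psd Y hY) hdiag j i
      calc W i j * Y j i ≤ |W i j * Y j i| := le_abs_self _
        _ = |W i j| * |Y j i| := abs_mul _ _
        _ ≤ |W i j| * 1 := by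
            exact mul_le_mul_of_nonneg_left hb (abs_nonneg _)
        _ = |W i j| := mul_one _
    constructor
    · -- α * nu ≤ maxq
      have key : ∀ r ∈ nuSet, α * r ≤ S.maxq W := by
        rintro r ⟨Y, hY, hdiag, rfl⟩
        obtain ⟨p, hp0, hpsupp, hpsum, hlift⟩ := hround Y hY hdiag
        have h0 := lift_nonneg S hW hlift
        rw [ip_comm] at h0
        rw [ip_sub, ip_smul, ip_sum] at h0
        have hexp : ∀ U : Finset (Fin n), ip W (p U • stensor U) = p U * f U := by
          intro U; rw [ip_smul, ip_stensor]
        simp only [hexp] at h0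
        have h1 : α * ip W Y ≤ ∑ U : Finset (Fin n), p U * f U := by linarith
        calc α * ip W Y ≤ ∑ U : Finset (Fin n), p U * f U := h1
          _ ≤ ∑ U : Finset (Fin n), p U * S.maxq W := by
              refine Finset.sum_le_sum fun U _ => ?_
              by_cases hU : U ∈ S.FA
              · exact mul_le_mul_of_nonneg_left (hfle U hU) (hp0 U)
              · rw [hpsupp U hU]; norm_num
          _ = S.maxq W := by rw [← Finset.sum_mul, hpsum, one_mul]
      by_cases hne : nuSet.Nonempty
      · rcases eq_or_lt_of_le hα with heq | hpos
        · rw [← heq]; simpa using hmaxq0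
        · have hle : S.nu W ≤ S.maxq W / α := by
            rw [hnu]
            refine csSup_le hne fun r hr => ?_
            rw [le_div_iff₀ hpos]
            rw [mul_comm]
            exact key r hr
          calc α * S.nu W ≤ α * (S.maxq W / α) :=
                mul_le_mul_of_nonneg_left hle hα
            _ = S.maxq W := by field_simp
      · rw [Set.not_nonempty_iff_eq_empty] at hne
        rw [hnu, hne, Real.sSup_empty, mul_zero]
        exact hmaxq0
    · exact csSup_le_csSup hnbdd hmne hsub
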